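/- Suppose Ψ + Γᵀ M(L) Γ ⪯ 0. Then for every x ∈ ℝ^{n_x}, the closed-loop successor state x⁺ = (A + B K₀) x + G φ(C_q x) satisfies (x⁺)ᵀ P x⁺ ≤ α² xᵀ P x. (One-step Lyapunov decrease established in the proof of Theorem 2.) -/

import Mathlib

open Matrix

/-- The Euclidean norm of a vector in `ℝ^k`. -/
noncomputable def eNorm {k : ℕ} (x : Fin k → ℝ) : ℝ := Real.sqrt (x ⬝ᵥ x)

lemma quadT {n m k : Type*} [Fintype n] [Fintype m] [Fintype k]
    (M : Matrix m n ℝ) (P : Matrix m m ℝ)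
    (N : Matrix m k ℝ) (x : n → ℝ) (y : k → ℝ) :
    x ⬝ᵥ (Mᵀ * P * N) *ᵥ y = (M *ᵥ x) ⬝ᵥ P *ᵥ (N *ᵥ y) := by
  rw [Matrix.mul_assoc, ← Matrix.mulVec_mulVec,
    Matrix.dotProduct_mulVec, Matrix.vecMul_transpose, ← Matrix.mulVec_mulVec]

lemma dot_self_nonneg {n : ℕ} (x : Fin n → ℝ) : 0 ≤ x ⬝ᵥ x :=
  Finset.sum_nonneg fun _ _ => mul_self_nonneg _

lemma eNorm_sq {n : ℕ} (x : Fin n → ℝ) : eNorm x ^ 2 = x ⬝ᵥ x :=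
  Real.sq_sqrt (dot_self_nonneg x)

/-- One-step Lyapunov decrease established in the proof of Theorem 2: if
`Ψ + Γᵀ M(L) Γ ⪯ 0` then for every state `x` the closed-loop successor state
`x⁺ = (A + BK₀)x + Gφ(C_q x)` satisfies `(x⁺)ᵀ P x⁺ ≤ α² xᵀ P x`. -/
theorem one_step_lyapunov_decrease
    {nx nu nφ nq : ℕ}
    (A : Matrix (Fin nx) (Fin nx) ℝ) (B : Matrix (Fin nx) (Fin nu) ℝ)
    (G : Matrix (Fin nx) (Fin nφ) ℝ) (Cq : Matrix (Fin nq) (Fin nx) ℝ)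
    (K₀ : Matrix (Fin nu) (Fin nx) ℝ)
    (φ : (Fin nq → ℝ) → (Fin nφ → ℝ)) (hφ0 : φ 0 = 0)
    (L : ℝ) (hL : 0 < L)
    (hφLip : ∀ q₁ q₂, eNorm (φ q₁ - φ q₂) ≤ L * eNorm (q₁ - q₂))
    (P : Matrix (Fin nx) (Fin nx) ℝ) (hP : P.PosDef)
    (α : ℝ) (hα : α ∈ Set.Ioo (0 : ℝ) 1) (ν : ℝ) (hν : 0 < ν)
    (hLMI :
      (-(Matrix.fromBlocks
          ((A + B * K₀)ᵀ * P * (A + B * K₀) - α ^ 2 • P)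
          ((A + B * K₀)ᵀ * P * G)
          (Gᵀ * P * (A + B * K₀))
          (Gᵀ * P * G) +
        (Matrix.fromBlocks Cq 0 0 (1 : Matrix (Fin nφ) (Fin nφ) ℝ))ᵀ *
          Matrix.fromBlocks ((ν⁻¹ * L ^ 2) • (1 : Matrix (Fin nq) (Fin nq) ℝ)) 0 0
            ((-ν⁻¹) • (1 : Matrix (Fin nφ) (Fin nφ) ℝ)) *
          Matrix.fromBlocks Cq 0 0 (1 : Matrix (Fin nφ) (Fin nφ) ℝ))).PosSemidef) :
    ∀ x : Fin nx → ℝ,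
      ((A + B * K₀).mulVec x + G.mulVec (φ (Cq.mulVec x))) ⬝ᵥ
          P.mulVec ((A + B * K₀).mulVec x + G.mulVec (φ (Cq.mulVec x))) ≤
        α ^ 2 * (x ⬝ᵥ P.mulVec x) := by
  intro x
  set F := A + B * K₀ with hF
  set q : Fin nq → ℝ := Cq *ᵥ x with hq
  set w : Fin nφ → ℝ := φ q with hw
  set z : (Fin nx ⊕ Fin nφ) → ℝ := Sum.elim x w with hz
  -- the sector bound from the Lipschitz condition
  have hsec : w ⬝ᵥ w ≤ L ^ 2 * (q ⬝ᵥ q) := by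
    have h := hφLip q 0
    rw [hφ0, sub_zero, sub_zero] at h
    have h2 : eNorm w ^ 2 ≤ (L * eNorm q) ^ 2 :=
      pow_le_pow_left₀ (Real.sqrt_nonneg _) h 2
    rw [eNorm_sq, mul_pow, eNorm_sq] at h2
    exact h2
  -- evaluate the LMI at z
  have hzz := hLMI.dotProduct_mulVec_nonneg z
  rw [star_trivial, Matrix.neg_mulVec, dotProduct_neg, Matrix.add_mulVec,
    dotProduct_add] at hzz
  -- the Ψ quadratic form
  have e1 : z ⬝ᵥ (Matrix.fromBlocks (Fᵀ * P * F - α ^ 2 • P) (Fᵀ * P * G)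
      (Gᵀ * P * F) (Gᵀ * P * G)) *ᵥ z =
      (F *ᵥ x + G *ᵥ w) ⬝ᵥ P *ᵥ (F *ᵥ x + G *ᵥ w) - α ^ 2 * (x ⬝ᵥ P *ᵥ x) := by
    rw [hz, Matrix.fromBlocks_mulVec, sumElim_dotProduct_sumElim]
    simp only [Matrix.sub_mulVec, dotProduct_add, dotProduct_sub,
      quadT, Matrix.smul_mulVec, dotProduct_smul, smul_eq_mul,
      Matrix.mulVec_add, add_dotProduct, Sum.elim_comp_inl, Sum.elim_comp_inr]
    ring
  -- the multiplier quadratic form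
  have e2 : z ⬝ᵥ ((Matrix.fromBlocks Cq 0 0 (1 : Matrix (Fin nφ) (Fin nφ) ℝ))ᵀ *
      Matrix.fromBlocks ((ν⁻¹ * L ^ 2) • (1 : Matrix (Fin nq) (Fin nq) ℝ)) 0 0
        ((-ν⁻¹) • (1 : Matrix (Fin nφ) (Fin nφ) ℝ)) *
      Matrix.fromBlocks Cq 0 0 (1 : Matrix (Fin nφ) (Fin nφ) ℝ)) *ᵥ z =
      ν⁻¹ * L ^ 2 * (q ⬝ᵥ q) - ν⁻¹ * (w ⬝ᵥ w) := by
    rw [quadT]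
    rw [hz, Matrix.fromBlocks_mulVec]
    simp only [Matrix.zero_mulVec, Matrix.one_mulVec, add_zero, zero_add, ← hq]
    rw [Matrix.fromBlocks_mulVec]
    simp only [Matrix.zero_mulVec, add_zero, zero_add, Matrix.smul_mulVec,
      Matrix.one_mulVec, sumElim_dotProduct_sumElim,
      dotProduct_smul, smul_eq_mul, Sum.elim_comp_inl, Sum.elim_comp_inr]
    ring
  rw [e1, e2] at hzz
  have hνinv : 0 < ν⁻¹ := inv_pos.mpr hν
  nlinarith [hzz, hsec, hνinv, mul_le_mul_of_nonneg_left hsec (le_of_lt hνinv)]
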